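/- In the setting of Problem 1, choose μ > 0, α̲ > 0 and β ≥ 0 satisfying μ(σ − L_{∇g}α̲) > β(μ² + 1), define M_1 = (σ − ᾱL_{∇g})/(2ᾱ) − μβ/(2α̲) and M_2 = β/(2μα̲), choose ᾱ > α̲ such that M_1 > M_2, assume f + g is coercive, and let (x_n)_{n∈ℕ} be a sequence generated by Algorithm 1. Define H : ℝ^m × ℝ^m → (−∞,+∞] by H(x,y) = (f+g)(x) + M_2‖x−y‖². Then there exists N > 0 such that for all n ≥ 1 there exists w_{n+1} ∈ ∂H(x_{n+1}, x_n) with ‖w_{n+1}‖ ≤ N(‖x_{n+1} − x_n‖ + ‖x_n − x_{n−1}‖), where ∂H denotes the limiting (Mordukhovich) subdifferential of H. -/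

import Mathlib

open Filter Topology RealInnerProductSpace

noncomputable section

variable {E : Type*} [NormedAddCommGroup E] [InnerProductSpace ℝ E]

/-- The Fréchet (viscosity) subdifferential of an extended-real-valued function `h` at `x`:
`v` belongs to it iff `x ∈ dom h` and
`liminf_{y → x} (h y - h x - ⟪v, y - x⟫)/‖y - x‖ ≥ 0`, expressed equivalently by the
epsilon-characterization of the liminf. -/
def frechetSubdiff (h : E → EReal) (x : E) : Set E :=
  {v | h x ≠ ⊤ ∧ ∀ ε : ℝ, 0 < ε →
    ∀ᶠ y in 𝓝 x, (((h x).toReal + ⟪v, y - x⟫ - ε * ‖y - x‖ : ℝ) : EReal) ≤ h y}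

/-- The limiting (Mordukhovich) subdifferential of `h` at `x`. -/
def limitingSubdiff (h : E → EReal) (x : E) : Set E :=
  {v | h x ≠ ⊤ ∧ ∃ xk vk : ℕ → E,
    Tendsto xk atTop (𝓝 x) ∧
    Tendsto (fun k => h (xk k)) atTop (𝓝 (h x)) ∧
    (∀ k, vk k ∈ frechetSubdiff h (xk k)) ∧
    Tendsto vk atTop (𝓝 v)}

lemma mem_limitingSubdiff_of_smooth (h : E → EReal) (x w : E) (hx : h x ≠ ⊤)
    (ψ : E → ℝ) (hψ : HasFDerivAt ψ (innerSL ℝ w) x)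
    (hle : ∀ y, (((h x).toReal + (ψ y - ψ x) : ℝ) : EReal) ≤ h y) :
    w ∈ limitingSubdiff h x := by
  have hfre : w ∈ frechetSubdiff h x := by
    refine ⟨hx, fun ε hε => ?_⟩
    filter_upwards [hψ.isLittleO.def hε] with y hy
    refine le_trans (EReal.coe_le_coe_iff.mpr ?_) (hle y)
    have h1 : |ψ y - ψ x - ⟪w, y - x⟫| ≤ ε * ‖y - x‖ := by
      simpa [Real.norm_eq_abs, innerSL_apply_apply] using hy
    have := (abs_le.mp h1).1
    linarith
  exact ⟨hx, fun _ => x, fun _ => w, tendsto_const_nhds, tendsto_const_nhds,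
    fun _ => hfre, tendsto_const_nhds⟩

lemma hasFDerivAt_psi [CompleteSpace E]
    (F g : E → ℝ) (hF : Differentiable ℝ F) (hg : Differentiable ℝ g)
    (a b M2 : ℝ) (ha : 0 < a) (xp x0 xm : E) :
    HasFDerivAt
      (fun q : WithLp 2 (E × E) =>
        a⁻¹ * ((F xp - F x0 - ⟪gradient F x0, xp - x0⟫ + a * ⟪xp, gradient g x0⟫
              + b * ⟪xp, xm - x0⟫)
          - (F (WithLp.equiv 2 _ q).1 - F x0 - ⟪gradient F x0, (WithLp.equiv 2 _ q).1 - x0⟫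
              + a * ⟪(WithLp.equiv 2 _ q).1, gradient g x0⟫
              + b * ⟪(WithLp.equiv 2 _ q).1, xm - x0⟫))
        + g (WithLp.equiv 2 _ q).1
        + M2 * ‖(WithLp.equiv 2 _ q).1 - (WithLp.equiv 2 _ q).2‖ ^ 2)
      (innerSL ℝ ((WithLp.equiv 2 (E × E)).symm
        (gradient g xp - gradient g x0 + (2 * M2) • (xp - x0)
            - a⁻¹ • (gradient F xp - gradient F x0) - (b / a) • (xm - x0),
         -((2 * M2) • (xp - x0)))))
      ((WithLp.equiv 2 (E × E)).symm (xp, x0)) := by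
  set e := WithLp.prodContinuousLinearEquiv 2 ℝ E E with he
  set P1 : WithLp 2 (E × E) →L[ℝ] E :=
    (ContinuousLinearMap.fst ℝ E E).comp e.toContinuousLinearMap with hP1def
  set P2 : WithLp 2 (E × E) →L[ℝ] E :=
    (ContinuousLinearMap.snd ℝ E E).comp e.toContinuousLinearMap with hP2def
  set p₀ : WithLp 2 (E × E) := (WithLp.equiv 2 (E × E)).symm (xp, x0) with hp₀
  have hP1 : HasFDerivAt (fun q : WithLp 2 (E × E) => (WithLp.equiv 2 _ q).1) P1 p₀ :=
    P1.hasFDerivAt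
  have hP2 : HasFDerivAt (fun q : WithLp 2 (E × E) => (WithLp.equiv 2 _ q).2) P2 p₀ :=
    P2.hasFDerivAt
  have hrF : HasFDerivAt F (InnerProductSpace.toDual ℝ E (gradient F xp)) xp :=
    (hF xp).hasGradientAt.hasFDerivAt
  have hrg : HasFDerivAt g (InnerProductSpace.toDual ℝ E (gradient g xp)) xp :=
    (hg xp).hasGradientAt.hasFDerivAt
  have hA : HasFDerivAt (fun u : E => ⟪gradient F x0, u - x0⟫)
      (innerSL ℝ (gradient F x0)) xp := by
    simpa [innerSL_apply_apply, inner_sub_right] using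
      ((innerSL ℝ (gradient F x0)).hasFDerivAt (x := xp)).sub_const ⟪gradient F x0, x0⟫
  have hB : HasFDerivAt (fun u : E => a * ⟪u, gradient g x0⟫)
      (a • innerSL ℝ (gradient g x0)) xp := by
    simpa [innerSL_apply_apply, real_inner_comm] using
      ((innerSL ℝ (gradient g x0)).hasFDerivAt (x := xp)).const_mul a
  have hC : HasFDerivAt (fun u : E => b * ⟪u, xm - x0⟫) (b • innerSL ℝ (xm - x0)) xp := by
    simpa [innerSL_apply_apply, inner_sub_left, inner_sub_right, real_inner_comm] using
      ((innerSL ℝ (xm - x0)).hasFDerivAt (x := xp)).const_mul b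
  have hr : HasFDerivAt (fun u : E => F u - F x0 - ⟪gradient F x0, u - x0⟫
      + a * ⟪u, gradient g x0⟫ + b * ⟪u, xm - x0⟫)
      (InnerProductSpace.toDual ℝ E (gradient F xp) - innerSL ℝ (gradient F x0)
        + a • innerSL ℝ (gradient g x0) + b • innerSL ℝ (xm - x0)) xp :=
    (((hrF.sub_const (F x0)).sub hA).add hB).add hC
  have h1 := hr.comp p₀ hP1
  have h2 := hrg.comp p₀ hP1
  have h3 := (hP1.sub hP2).norm_sq
  have hbig := (((h1.const_sub (F xp - F x0 - ⟪gradient F x0, xp - x0⟫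
      + a * ⟪xp, gradient g x0⟫ + b * ⟪xp, xm - x0⟫)).const_mul a⁻¹).add h2).add
      (h3.const_mul M2)
  refine HasFDerivAt.congr_fderiv hbig ?_
  ext q
  simp only [hP1def, hP2def, hp₀, he, WithLp.equiv_apply, WithLp.ofLp_fst, WithLp.ofLp_snd,
    ContinuousLinearMap.add_apply, ContinuousLinearMap.coe_smul',
    ContinuousLinearMap.coe_comp', Pi.smul_apply, Function.comp_apply,
    ContinuousLinearMap.neg_apply, ContinuousLinearMap.comp_apply,
    ContinuousLinearMap.sub_apply, ContinuousLinearMap.smul_apply,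
    InnerProductSpace.toDual_apply_apply, innerSL_apply_apply, ContinuousLinearMap.coe_fst',
    ContinuousLinearMap.coe_snd', ContinuousLinearEquiv.coe_coe,
    WithLp.prodContinuousLinearEquiv_apply, WithLp.prod_inner_apply,
    WithLp.equiv_symm_apply, WithLp.toLp_fst, WithLp.toLp_snd, Equiv.apply_symm_apply,
    inner_add_left, inner_sub_left, inner_sub_right, inner_neg_left,
    real_inner_smul_left, smul_eq_mul, nsmul_eq_mul, Nat.cast_ofNat, Pi.sub_apply]
  field_simp
  ring

set_option maxHeartbeats 2000000

/-- Lemma 3.5 (H2): there is `N > 0` such that for every `n ≥ 1` there exists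
`w_{n+1} ∈ ∂H(x_{n+1}, x_n)` with `‖w_{n+1}‖ ≤ N(‖x_{n+1} - x_n‖ + ‖x_n - x_{n-1}‖)`,
where `H(x,y) = (f+g)(x) + M2‖x-y‖²` on the Euclidean product space. -/
theorem stmt11
    (m : ℕ)
    (f : EuclideanSpace ℝ (Fin m) → EReal)
    -- `f` is proper (never `⊥`, somewhere finite), lower semicontinuous and bounded below
    (hfbot : ∀ z, f z ≠ ⊥) (hfproper : ∃ z, f z ≠ ⊤)
    (hflsc : LowerSemicontinuous f)
    (hfbdd : ∃ cl : ℝ, ∀ z, (cl : EReal) ≤ f z)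
    -- `g` is differentiable with `Lg`-Lipschitz gradient
    (g : EuclideanSpace ℝ (Fin m) → ℝ) (Lg : ℝ) (hLg : 0 ≤ Lg)
    (hgdiff : Differentiable ℝ g)
    (hglip : ∀ z w, ‖gradient g z - gradient g w‖ ≤ Lg * ‖z - w‖)
    -- `F` is `σ`-strongly convex and differentiable with `LF`-Lipschitz gradient
    (F : EuclideanSpace ℝ (Fin m) → ℝ) (σ LF : ℝ) (hσ : 0 < σ) (hLF : 0 < LF)
    (hFconv : ConvexOn ℝ Set.univ fun z => F z - σ / 2 * ‖z‖ ^ 2)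
    (hFdiff : Differentiable ℝ F)
    (hFlip : ∀ z w, ‖gradient F z - gradient F w‖ ≤ LF * ‖z - w‖)
    -- parameters of the algorithm
    (αlo αhi β : ℝ) (hαlo : 0 < αlo) (hαorder : αlo ≤ αhi) (hβ : 0 ≤ β)
    (α βs : ℕ → ℝ)
    (hα : ∀ n, 1 ≤ n → αlo ≤ α n ∧ α n ≤ αhi)
    (hβs : ∀ n, 1 ≤ n → 0 ≤ βs n ∧ βs n ≤ β)
    -- the sequence generated by Algorithm 1:
    -- `x (n+1)` minimizes `u ↦ D_F(u, x n) + α n • ⟪u, ∇g(x n)⟫ + βs n • ⟪u, x (n-1) - x n⟫ + α n • f u`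
    (x : ℕ → EuclideanSpace ℝ (Fin m))
    (halg : ∀ n, 1 ≤ n → ∀ u,
      ((F (x (n + 1)) - F (x n) - ⟪gradient F (x n), x (n + 1) - x n⟫
          + α n * ⟪x (n + 1), gradient g (x n)⟫
          + βs n * ⟪x (n + 1), x (n - 1) - x n⟫ : ℝ) : EReal)
        + (α n : EReal) * f (x (n + 1))
      ≤ ((F u - F (x n) - ⟪gradient F (x n), u - x n⟫
          + α n * ⟪u, gradient g (x n)⟫
          + βs n * ⟪u, x (n - 1) - x n⟫ : ℝ) : EReal)
        + (α n : EReal) * f u)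
    -- the parameters `μ, αlo, β` satisfy `μ(σ - Lg·αlo) > β(μ² + 1)` and `αhi` is chosen
    -- with `αlo < αhi` such that `M1 > M2`
    (μ : ℝ) (hμ : 0 < μ)
    (hcond : β * (μ ^ 2 + 1) < μ * (σ - Lg * αlo))
    (M1 M2 : ℝ)
    (hM1 : M1 = (σ - αhi * Lg) / (2 * αhi) - μ * β / (2 * αlo))
    (hM2 : M2 = β / (2 * μ * αlo))
    (hαstrict : αlo < αhi) (hM : M2 < M1)

    -- `f + g` is coercive
    (hcoer : Tendsto (fun z => f z + ((g z : ℝ) : EReal))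
      (comap (fun z : EuclideanSpace ℝ (Fin m) => ‖z‖) atTop) (𝓝 ⊤))

    -- `H(x, y) = (f+g)(x) + M2‖x - y‖²` on the Euclidean product space
    (H : WithLp 2 (EuclideanSpace ℝ (Fin m) × EuclideanSpace ℝ (Fin m)) → EReal)
    (hH : ∀ p, H p = f (WithLp.equiv 2 _ p).1
      + ((g (WithLp.equiv 2 _ p).1 + M2 * ‖(WithLp.equiv 2 _ p).1 - (WithLp.equiv 2 _ p).2‖ ^ 2 : ℝ) : EReal))
    :
    ∃ N : ℝ, 0 < N ∧ ∀ n, 1 ≤ n →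
      ∃ w ∈ limitingSubdiff H ((WithLp.equiv 2 _).symm (x (n + 1), x n)),
        ‖w‖ ≤ N * (‖x (n + 1) - x n‖ + ‖x n - x (n - 1)‖) := by
  have hM2nn : 0 ≤ M2 := by rw [hM2]; positivity
  refine ⟨Lg + 4 * M2 + LF / αlo + β / αlo + 1, by positivity, fun n hn => ?_⟩
  obtain ⟨ha1, ha2⟩ := hα n hn
  obtain ⟨hb1, hb2⟩ := hβs n hn
  set a := α n with hadef
  set b := βs n with hbdef
  have hapos : 0 < a := lt_of_lt_of_le hαlo ha1
  set xp := x (n + 1) with hxpdef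
  set x0 := x n with hx0def
  set xm := x (n - 1) with hxmdef
  -- f xp is finite
  have hfxp : f xp ≠ ⊤ := by
    obtain ⟨z, hz⟩ := hfproper
    intro htop
    have h1 := halg n hn z
    rw [htop, EReal.mul_top_of_pos (by exact_mod_cast hapos : (0 : EReal) < (a : EReal)),
      EReal.coe_add_top, ← EReal.coe_toReal hz (hfbot z), ← EReal.coe_mul,
      ← EReal.coe_add] at h1
    exact EReal.coe_ne_top _ (top_le_iff.mp h1)
  set c := (f xp).toReal with hcdef
  have hc : f xp = (c : EReal) := (EReal.coe_toReal hfxp (hfbot xp)).symm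
  -- key real inequality from the algorithm
  have key : ∀ u : EuclideanSpace ℝ (Fin m), ∀ y : ℝ, f u = (y : EReal) →
      F xp - F x0 - ⟪gradient F x0, xp - x0⟫ + a * ⟪xp, gradient g x0⟫
          + b * ⟪xp, xm - x0⟫ + a * c
      ≤ F u - F x0 - ⟪gradient F x0, u - x0⟫ + a * ⟪u, gradient g x0⟫
          + b * ⟪u, xm - x0⟫ + a * y := by
    intro u y hy
    have h1 := halg n hn u
    rw [hc, hy, ← EReal.coe_mul, ← EReal.coe_mul, ← EReal.coe_add, ← EReal.coe_add,
      EReal.coe_le_coe_iff] at h1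
    exact h1
  set w1 := gradient g xp - gradient g x0 + (2 * M2) • (xp - x0)
      - a⁻¹ • (gradient F xp - gradient F x0) - (b / a) • (xm - x0) with hw1
  set w2 := -((2 * M2) • (xp - x0)) with hw2
  refine ⟨(WithLp.equiv 2 _).symm (w1, w2), ?_, ?_⟩
  · -- membership in the limiting subdifferential
    have hHp₀ : H ((WithLp.equiv 2 _).symm (xp, x0))
        = ((c + (g xp + M2 * ‖xp - x0‖ ^ 2) : ℝ) : EReal) := by
      rw [hH]
      simp only [Equiv.apply_symm_apply]
      rw [hc, ← EReal.coe_add]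
    refine mem_limitingSubdiff_of_smooth H _ _ (by rw [hHp₀]; exact EReal.coe_ne_top _)
      (fun q =>
        a⁻¹ * ((F xp - F x0 - ⟪gradient F x0, xp - x0⟫ + a * ⟪xp, gradient g x0⟫
              + b * ⟪xp, xm - x0⟫)
          - (F (WithLp.equiv 2 _ q).1 - F x0 - ⟪gradient F x0, (WithLp.equiv 2 _ q).1 - x0⟫
              + a * ⟪(WithLp.equiv 2 _ q).1, gradient g x0⟫
              + b * ⟪(WithLp.equiv 2 _ q).1, xm - x0⟫))
        + g (WithLp.equiv 2 _ q).1
        + M2 * ‖(WithLp.equiv 2 _ q).1 - (WithLp.equiv 2 _ q).2‖ ^ 2) ?_ ?_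
    · exact hasFDerivAt_psi F g hFdiff hgdiff a b M2 hapos xp x0 xm
    · intro q
      rw [hH q, hHp₀, EReal.toReal_coe]
      rcases eq_or_ne (f (WithLp.equiv 2 _ q).1) ⊤ with htop | hne
      · rw [htop, EReal.top_add_of_ne_bot (EReal.coe_ne_bot _)]
        exact le_top
      · have hy : f (WithLp.equiv 2 _ q).1
            = (((f (WithLp.equiv 2 _ q).1).toReal : ℝ) : EReal) :=
          (EReal.coe_toReal hne (hfbot _)).symm
        rw [hy, ← EReal.coe_add, EReal.coe_le_coe_iff]
        have hk := key (WithLp.equiv 2 _ q).1 _ hy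
        set u := (WithLp.equiv 2 _ q).1 with hudef
        set v := (WithLp.equiv 2 _ q).2 with hvdef
        set y := (f u).toReal with hydef
        simp only [Equiv.apply_symm_apply]
        have h2 : a⁻¹ * ((F xp - F x0 - ⟪gradient F x0, xp - x0⟫
              + a * ⟪xp, gradient g x0⟫ + b * ⟪xp, xm - x0⟫)
            - (F u - F x0 - ⟪gradient F x0, u - x0⟫ + a * ⟪u, gradient g x0⟫
              + b * ⟪u, xm - x0⟫)) ≤ y - c := by
          rw [inv_mul_le_iff₀ hapos]
          ring_nf
          ring_nf at hk
          linarith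
        linarith [h2]
  · -- norm bound
    have e2 : ‖gradient F xp - gradient F x0‖ ≤ LF * ‖xp - x0‖ := hFlip xp x0
    have e1 : ‖gradient g xp - gradient g x0‖ ≤ Lg * ‖xp - x0‖ := hglip xp x0
    have hainv : a⁻¹ ≤ αlo⁻¹ := by
      rw [inv_le_inv₀ hapos hαlo]
      exact ha1
    have hba : b / a ≤ β / αlo := div_le_div₀ hβ hb2 hαlo ha1
    have nB : ‖(2 * M2) • (xp - x0)‖ = 2 * M2 * ‖xp - x0‖ := by
      rw [norm_smul, Real.norm_eq_abs, abs_of_nonneg (by positivity)]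
    have nC : ‖a⁻¹ • (gradient F xp - gradient F x0)‖ ≤ αlo⁻¹ * (LF * ‖xp - x0‖) := by
      rw [norm_smul, Real.norm_eq_abs, abs_of_nonneg (inv_nonneg.mpr hapos.le)]
      exact mul_le_mul hainv e2 (norm_nonneg _) (inv_nonneg.mpr hαlo.le)
    have nD : ‖(b / a) • (xm - x0)‖ ≤ β / αlo * ‖x0 - xm‖ := by
      rw [norm_smul, Real.norm_eq_abs, abs_of_nonneg (div_nonneg hb1 hapos.le),
        norm_sub_rev]
      exact mul_le_mul_of_nonneg_right hba (norm_nonneg _)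
    have nw1 : ‖w1‖ ≤ Lg * ‖xp - x0‖ + 2 * M2 * ‖xp - x0‖
        + αlo⁻¹ * (LF * ‖xp - x0‖) + β / αlo * ‖x0 - xm‖ := by
      have t1 : ‖w1‖ ≤ ‖gradient g xp - gradient g x0 + (2 * M2) • (xp - x0)
            - a⁻¹ • (gradient F xp - gradient F x0)‖ + ‖(b / a) • (xm - x0)‖ :=
        norm_sub_le _ _
      have t2 : ‖gradient g xp - gradient g x0 + (2 * M2) • (xp - x0)
            - a⁻¹ • (gradient F xp - gradient F x0)‖
          ≤ ‖gradient g xp - gradient g x0 + (2 * M2) • (xp - x0)‖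
            + ‖a⁻¹ • (gradient F xp - gradient F x0)‖ := norm_sub_le _ _
      have t3 : ‖gradient g xp - gradient g x0 + (2 * M2) • (xp - x0)‖
          ≤ ‖gradient g xp - gradient g x0‖ + ‖(2 * M2) • (xp - x0)‖ := norm_add_le _ _
      linarith [nB, nC, nD, e1]
    have nw2 : ‖w2‖ = 2 * M2 * ‖xp - x0‖ := by rw [hw2, norm_neg, nB]
    have hwle : ‖(WithLp.equiv 2 _).symm (w1, w2)‖ ≤ ‖w1‖ + ‖w2‖ := by
      rw [WithLp.prod_norm_eq_of_L2]
      simp only [WithLp.equiv_symm_apply, WithLp.toLp_fst, WithLp.toLp_snd]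
      calc Real.sqrt (‖w1‖ ^ 2 + ‖w2‖ ^ 2)
          ≤ Real.sqrt ((‖w1‖ + ‖w2‖) ^ 2) := Real.sqrt_le_sqrt
            (by nlinarith [norm_nonneg w1, norm_nonneg w2])
        _ = ‖w1‖ + ‖w2‖ := Real.sqrt_sq (by positivity)
    have hLFa : αlo⁻¹ * (LF * ‖xp - x0‖) = LF / αlo * ‖xp - x0‖ := by ring
    have hs : (0 : ℝ) ≤ ‖xp - x0‖ := norm_nonneg _
    have ht : (0 : ℝ) ≤ ‖x0 - xm‖ := norm_nonneg _
    have hLFαlo : (0 : ℝ) ≤ LF / αlo := by positivity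
    have hβαlo : (0 : ℝ) ≤ β / αlo := by positivity
    nlinarith [hwle, nw1, nw2, mul_nonneg hβαlo hs, mul_nonneg hLg ht,
      mul_nonneg hM2nn ht, mul_nonneg hLFαlo ht, mul_nonneg hβ ht]
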